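/- arXiv:2506.13221 — 4 statements merged into one kernel-verified Lean document; each statement's English description precedes it below -/
import Mathlib

section
/- Let f : ℝⁿ → ℝⁿ and let F : ℝⁿ × ℝⁿ → ℝⁿ satisfy the Lipschitz estimate ‖F(a,b) − F(a',b')‖ ≤ L(‖a − a'‖ + ‖b − b'‖) for all a,a',b,b' and the consistency condition F(p,p) = f(p) for all p. Let τ, h > 0 and let (uⱼ)_{j∈ℤ} be a family of vectors in ℝⁿ such that uⱼ = 0 for all but finitely many j. Define the updated values wⱼ := uⱼ − (τ/h)(F(uⱼ, u_{j+1}) − F(u_{j−1}, uⱼ)). Then Σ_{j∈ℤ} h‖wⱼ − uⱼ‖ ≤ 2Lτ Σ_{j∈ℤ} ‖u_{j+1} − uⱼ‖. -/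
/-- auxiliary: a real-valued function on ℤ with finite support is summable. -/
lemma summable_of_finsupp {g : ℤ → ℝ} (hg : (Function.support g).Finite) :
    Summable g := by
  apply summable_of_ne_finset_zero (s := hg.toFinset)
  intro i hi
  by_contra hc
  exact hi (hg.mem_toFinset.mpr hc)

/-- one-step Lipschitz-continuity-in-time estimate for the explicit
finite volume scheme with a consistent Lipschitz numerical flux. -/
theorem stmt1 (n : ℕ)
    (f : EuclideanSpace ℝ (Fin n) → EuclideanSpace ℝ (Fin n))
    (F : EuclideanSpace ℝ (Fin n) → EuclideanSpace ℝ (Fin n) → EuclideanSpace ℝ (Fin n))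
    (L : ℝ)
    (hLip : ∀ a a' b b', ‖F a b - F a' b'‖ ≤ L * (‖a - a'‖ + ‖b - b'‖))
    (hcons : ∀ p, F p p = f p)
    (τ h : ℝ) (hτ : 0 < τ) (hh : 0 < h)
    (u : ℤ → EuclideanSpace ℝ (Fin n))
    (hfin : (Function.support u).Finite)
    (w : ℤ → EuclideanSpace ℝ (Fin n))
    (hw : ∀ j, w j = u j - (τ / h) • (F (u j) (u (j + 1)) - F (u (j - 1)) (u j))) :
    ∑' j : ℤ, h * ‖w j - u j‖ ≤ 2 * L * τ * ∑' j : ℤ, ‖u (j + 1) - u j‖ := by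
  set d : ℤ → ℝ := fun j => ‖u (j + 1) - u j‖ with hd
  set g : ℤ → ℝ := fun j => L * τ * (d (j - 1) + d j) with hg
  set a : ℤ → ℝ := fun j => h * ‖w j - u j‖ with ha
  -- pointwise bound
  have key : ∀ j : ℤ, a j ≤ g j := by
    intro j
    have e1 : w j - u j = -((τ / h) • (F (u j) (u (j + 1)) - F (u (j - 1)) (u j))) := by
      rw [hw j]; abel
    have e2 : a j = τ * ‖F (u j) (u (j + 1)) - F (u (j - 1)) (u j)‖ := by
      simp only [ha, e1, norm_neg, norm_smul, Real.norm_eq_abs,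
        abs_of_pos (div_pos hτ hh)]
      field_simp
    have hb := hLip (u j) (u (j - 1)) (u (j + 1)) (u j)
    have hle : a j ≤ τ * (L * (‖u j - u (j - 1)‖ + ‖u (j + 1) - u j‖)) := by
      rw [e2]; exact mul_le_mul_of_nonneg_left hb hτ.le
    have e3 : d (j - 1) = ‖u j - u (j - 1)‖ := by simp [hd]
    simp only [hg, e3]
    linarith [hle]
  have hanneg : ∀ j : ℤ, 0 ≤ a j := fun j =>
    mul_nonneg hh.le (norm_nonneg _)
  -- finite supports
  have hS1 : (Function.support d).Finite := by
    apply Set.Finite.subset (hfin.union (hfin.preimage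
      (Set.injOn_of_injective (add_left_injective (1 : ℤ)))))
    intro j hj
    rw [Set.mem_union]
    by_contra hc
    push_neg at hc
    obtain ⟨h1, h2⟩ := hc
    have hu : u j = 0 := Function.notMem_support.mp h1
    have hu' : u (j + 1) = 0 := Function.notMem_support.mp h2
    simp [hd, hu, hu'] at hj
  have hS2 : (Function.support fun j : ℤ => d (j - 1)).Finite := by
    apply Set.Finite.subset (hS1.preimage
      (Set.injOn_of_injective (sub_left_injective (b := (1 : ℤ)))))
    intro j hj
    exact hj
  have hSg : (Function.support g).Finite := by
    apply Set.Finite.subset (hS2.union hS1)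
    intro j hj
    rw [Set.mem_union]
    by_contra hc
    push_neg at hc
    obtain ⟨h1, h2⟩ := hc
    have h1' : d (j - 1) = 0 := Function.notMem_support.mp h1
    have h2' : d j = 0 := Function.notMem_support.mp h2
    simp [hg, h1', h2'] at hj
  have hsumd : Summable d := summable_of_finsupp hS1
  have hsumd' : Summable (fun j : ℤ => d (j - 1)) := summable_of_finsupp hS2
  have hsumg : Summable g := summable_of_finsupp hSg
  have hsuma : Summable a := by
    apply summable_of_finsupp
    apply Set.Finite.subset hSg
    intro j hj
    rw [Function.mem_support] at hj ⊢
    intro hgz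
    exact hj (le_antisymm (hgz ▸ key j) (hanneg j))
  -- sum up
  have step1 : ∑' j : ℤ, a j ≤ ∑' j : ℤ, g j := Summable.tsum_le_tsum key hsuma hsumg
  have step2 : ∑' j : ℤ, g j = L * τ * ((∑' j : ℤ, d (j - 1)) + ∑' j : ℤ, d j) := by
    rw [← Summable.tsum_add hsumd' hsumd, ← tsum_mul_left]
  have step3 : (∑' j : ℤ, d (j - 1)) = ∑' j : ℤ, d j :=
    (Equiv.subRight (1 : ℤ)).tsum_eq d
  calc ∑' j : ℤ, a j ≤ ∑' j : ℤ, g j := step1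
    _ = 2 * L * τ * ∑' j : ℤ, d j := by rw [step2, step3]; ring
end

section
/- Let f : ℝⁿ → ℝⁿ and let F : ℝⁿ × ℝⁿ → ℝⁿ satisfy ‖F(a,b) − F(a',b')‖ ≤ L(‖a−a'‖ + ‖b−b'‖) for all arguments and F(p,p) = f(p) for all p. Let τ, h > 0 with τ ≤ h, fix tⁿ ∈ ℝ and set t^{n+1} := tⁿ + τ, and let the grid be x_{j+1/2} = jh with cells I_j = (x_{j−1/2}, x_{j+1/2}). Let (uⱼ)_{j∈ℤ} ⊂ ℝⁿ vanish for all but finitely many j, define u : ℝ → ℝⁿ by u(x) = uⱼ for x ∈ I_j, and define the updated grid function u' : ℝ → ℝⁿ by u'(x) = uⱼ − (τ/h)(F(uⱼ,u_{j+1}) − F(u_{j−1},uⱼ)) for x ∈ I_j. Then there is a constant C depending only on L such that for every continuously differentiable compactly supported φ : ℝ × ℝ → ℝ, ‖∫_{tⁿ}^{t^{n+1}} ∫_ℝ (∂ₜφ(t,x) u(x) + ∂ₓφ(t,x) f(u(x))) dx dt − ∫_ℝ (φ(t^{n+1},x) u'(x) − φ(tⁿ,x) u(x)) dx‖ ≤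 C h ‖φ‖_{W^{1,∞}(ℝ²)} τ Σ_{j∈ℤ} ‖u_{j+1} − uⱼ‖. -/
open MeasureTheory

section AuxWC
open Set Function

section Aux

variable {E : Type*} [NormedAddCommGroup E] [NormedSpace ℝ E] [CompleteSpace E]

/-- a.e. every real lies in a unique open cell. -/
lemma ae_cell {h : ℝ} (hh : 0 < h) :
    ∀ᵐ x : ℝ, ∃ j : ℤ, x ∈ Set.Ioo (((j : ℝ) - 1) * h) ((j : ℝ) * h) ∧
      ∀ i : ℤ, x ∈ Set.Ioo (((i : ℝ) - 1) * h) ((i : ℝ) * h) → i = j := by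
  have h0 : ∀ᵐ x : ℝ, ∀ j : ℤ, x ≠ (j : ℝ) * h := by
    rw [MeasureTheory.ae_all_iff]
    intro j
    rw [MeasureTheory.ae_iff]
    have : {x : ℝ | ¬ x ≠ (j : ℝ) * h} = {((j : ℝ) * h)} := by
      ext x; simp
    rw [this]
    exact Real.volume_singleton
  filter_upwards [h0] with x hx
  set j : ℤ := ⌈x / h⌉ with hj
  have hle : x / h ≤ (j : ℝ) := Int.le_ceil _
  have hlt : x / h < (j : ℝ) := by
    rcases lt_or_eq_of_le hle with h1 | h1
    · exact h1
    · exact absurd (by rw [← h1]; field_simp : x = (j : ℝ) * h) (hx j)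
  have hgt : ((j : ℝ) - 1) < x / h := by
    have := Int.ceil_lt_add_one (x / h)
    push_cast at this ⊢
    linarith
  have hx1 : ((j : ℝ) - 1) * h < x := by
    calc ((j : ℝ) - 1) * h < (x / h) * h := by
          exact mul_lt_mul_of_pos_right hgt hh
      _ = x := by field_simp
  have hx2 : x < (j : ℝ) * h := by
    calc x = (x / h) * h := by field_simp
      _ < (j : ℝ) * h := mul_lt_mul_of_pos_right hlt hh
  refine ⟨j, ⟨hx1, hx2⟩, ?_⟩
  intro i ⟨hi1, hi2⟩
  have e1 : ((i : ℝ) - 1) < x / h := by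
    rw [lt_div_iff₀ hh]; exact hi1
  have e2 : x / h < (i : ℝ) := by
    rw [div_lt_iff₀ hh]; exact hi2
  have : ((i : ℝ) - 1) < (j : ℝ) := lt_of_lt_of_le e1 hle
  have : ((j : ℝ) - 1) < (i : ℝ) := lt_trans hgt e2
  have h1 : i - 1 < j := by exact_mod_cast ‹((i : ℝ) - 1) < (j : ℝ)›
  have h2 : j - 1 < i := by exact_mod_cast ‹((j : ℝ) - 1) < (i : ℝ)›
  omega

/-- integral of a scalar function times a piecewise-constant, finitely supported function. -/
lemma pw_integral {h : ℝ} (hh : 0 < h) (K : Finset ℤ) (v : ℤ → E)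
    (hv : ∀ j ∉ K, v j = 0) (ψ : ℝ → ℝ) (hψ : Continuous ψ) (g : ℝ → E)
    (hg : ∀ (j : ℤ), ∀ x ∈ Set.Ioo (((j : ℝ) - 1) * h) ((j : ℝ) * h), g x = v j) :
    Integrable (fun x => ψ x • g x) volume ∧
      ∫ x, ψ x • g x =
        ∑ j ∈ K, (∫ x in Set.Ioo (((j : ℝ) - 1) * h) ((j : ℝ) * h), ψ x) • v j := by
  set G : ℝ → E := fun x => ∑ j ∈ K,
    Set.indicator (Set.Ioo (((j : ℝ) - 1) * h) ((j : ℝ) * h)) (fun y => ψ y • v j) x with hG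
  have hterm : ∀ j : ℤ, Integrable
      (Set.indicator (Set.Ioo (((j : ℝ) - 1) * h) ((j : ℝ) * h)) (fun y => ψ y • v j)) volume := by
    intro j
    have hc : Continuous fun y => ψ y • v j := hψ.smul continuous_const
    have : IntegrableOn (fun y => ψ y • v j)
        (Set.Ioo (((j : ℝ) - 1) * h) ((j : ℝ) * h)) volume :=
      (hc.integrableOn_Icc).mono_set Set.Ioo_subset_Icc_self
    exact this.integrable_indicator measurableSet_Ioo
  have hGint : Integrable G volume := integrable_finset_sum _ fun j _ => hterm j
  have hae : (fun x => ψ x • g x) =ᵐ[volume] G := by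
    filter_upwards [ae_cell hh] with x hx
    obtain ⟨j, hxj, huniq⟩ := hx
    have hval : ∀ i ∈ K, i ≠ j →
        Set.indicator (Set.Ioo (((i : ℝ) - 1) * h) ((i : ℝ) * h)) (fun y => ψ y • v i) x = 0 := by
      intro i _ hij
      exact Set.indicator_of_notMem (fun hxi => hij (huniq i hxi)) _
    have hGx : G x = ∑ j ∈ K,
        Set.indicator (Set.Ioo (((j : ℝ) - 1) * h) ((j : ℝ) * h)) (fun y => ψ y • v j) x := rfl
    by_cases hjK : j ∈ K
    · rw [hGx]
      rw [Finset.sum_eq_single_of_mem j hjK (fun i hi hij => hval i hi hij),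
        Set.indicator_of_mem hxj, hg j x hxj]
    · have : G x = 0 := by
        rw [hG]
        apply Finset.sum_eq_zero
        intro i hi
        exact hval i hi (fun e => hjK (e ▸ hi))
      rw [this, hg j x hxj, hv j hjK, smul_zero]
  constructor
  · exact hGint.congr hae.symm
  · rw [integral_congr_ae hae]
    have : ∫ x, G x = ∑ j ∈ K, ∫ x, Set.indicator (Set.Ioo (((j : ℝ) - 1) * h) ((j : ℝ) * h)) (fun y => ψ y • v j) x :=
      integral_finset_sum _ fun j _ => hterm j
    rw [this]
    refine Finset.sum_congr rfl fun j _ => ?_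
    rw [integral_indicator measurableSet_Ioo, integral_smul_const]

end Aux


section Aux2

variable {φ : ℝ × ℝ → ℝ}

lemma hasDerivAt_snd (hφ : ContDiff ℝ 1 φ) (t y : ℝ) :
    HasDerivAt (fun y => φ (t, y)) (fderiv ℝ φ (t, y) (0, 1)) y := by
  have h1 : HasFDerivAt φ (fderiv ℝ φ (t, y)) (t, y) :=
    (hφ.differentiable one_ne_zero (t, y)).hasFDerivAt
  have h2 : HasDerivAt (fun y : ℝ => ((t, y) : ℝ × ℝ)) ((0 : ℝ), (1 : ℝ)) y :=
    (hasDerivAt_const y t).prodMk (hasDerivAt_id y)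
  exact h1.comp_hasDerivAt y h2

lemma hasDerivAt_fst (hφ : ContDiff ℝ 1 φ) (x s : ℝ) :
    HasDerivAt (fun s => φ (s, x)) (fderiv ℝ φ (s, x) (1, 0)) s := by
  have h1 : HasFDerivAt φ (fderiv ℝ φ (s, x)) (s, x) :=
    (hφ.differentiable one_ne_zero (s, x)).hasFDerivAt
  have h2 : HasDerivAt (fun s : ℝ => ((s, x) : ℝ × ℝ)) ((1 : ℝ), (0 : ℝ)) s :=
    (hasDerivAt_id s).prodMk (hasDerivAt_const s x)
  exact h1.comp_hasDerivAt s h2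

lemma cont_fderiv_apply (hφ : ContDiff ℝ 1 φ) (w : ℝ × ℝ) :
    Continuous fun p => fderiv ℝ φ p w :=
  (hφ.continuous_fderiv one_ne_zero).clm_apply continuous_const

lemma ftc_partial2 (hφ : ContDiff ℝ 1 φ) (t a b : ℝ) (hab : a ≤ b) :
    ∫ x in Set.Ioo a b, fderiv ℝ φ (t, x) (0, 1) = φ (t, b) - φ (t, a) := by
  have hcont : Continuous fun x : ℝ => fderiv ℝ φ (t, x) (0, 1) :=
    (cont_fderiv_apply hφ _).comp (continuous_const.prodMk continuous_id)
  rw [← MeasureTheory.integral_Ioc_eq_integral_Ioo,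
    ← intervalIntegral.integral_of_le hab]
  exact intervalIntegral.integral_eq_sub_of_hasDerivAt
    (fun y _ => hasDerivAt_snd hφ t y) (hcont.intervalIntegrable a b)

lemma ftc_partial1 (hφ : ContDiff ℝ 1 φ) (x a b : ℝ) (hab : a ≤ b) :
    ∫ t in Set.Ioc a b, fderiv ℝ φ (t, x) (1, 0) = φ (b, x) - φ (a, x) := by
  have hcont : Continuous fun t : ℝ => fderiv ℝ φ (t, x) (1, 0) :=
    (cont_fderiv_apply hφ _).comp (continuous_id.prodMk continuous_const)
  rw [← intervalIntegral.integral_of_le hab]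
  exact intervalIntegral.integral_eq_sub_of_hasDerivAt
    (fun y _ => hasDerivAt_fst hφ x y) (hcont.intervalIntegrable a b)

/-- a slice of a compactly supported function has compact support. -/
lemma slice_hcs {G : Type*} [NormedAddCommGroup G] {c : ℝ × ℝ → G}
    (hc : HasCompactSupport c) (t : ℝ) : HasCompactSupport fun x => c (t, x) := by
  obtain ⟨R, hR⟩ := hc.isCompact.isBounded.subset_closedBall 0
  set A : ℝ := |R| + 1 with hA
  apply HasCompactSupport.intro (isCompact_Icc (a := -A) (b := A))
  intro x hx
  have hxA : A < |x| := by
    simp only [Set.mem_Icc, not_and_or, not_le] at hx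
    rcases hx with hx | hx
    · calc A < -x := by linarith
        _ ≤ |x| := neg_le_abs x
    · exact lt_of_lt_of_le hx (le_abs_self x)
  have hxR : R < |x| := lt_of_le_of_lt (le_trans (le_abs_self R) (by linarith)) hxA
  have : (t, x) ∉ tsupport c := by
    intro hmem
    have h1 := hR hmem
    rw [Metric.mem_closedBall, dist_zero_right] at h1
    have hsnd : |x| ≤ ‖((t, x) : ℝ × ℝ)‖ := norm_snd_le (t, x)
    linarith
  exact image_eq_zero_of_notMem_tsupport this

lemma fderiv_apply_hcs (hφ : ContDiff ℝ 1 φ) (hc : HasCompactSupport φ) (w : ℝ × ℝ) :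
    HasCompactSupport fun p => fderiv ℝ φ p w := by
  have h1 : HasCompactSupport (fderiv ℝ φ) := hc.fderiv (𝕜 := ℝ)
  exact h1.comp_left (g := fun L : ℝ × ℝ →L[ℝ] ℝ => L w) (by simp)

lemma integral_partial2_zero (hφ : ContDiff ℝ 1 φ) (hc : HasCompactSupport φ) (t : ℝ) :
    ∫ x : ℝ, fderiv ℝ φ (t, x) (0, 1) = 0 := by
  have hhcs : HasCompactSupport fun x : ℝ => fderiv ℝ φ (t, x) (0, 1) :=
    slice_hcs (fderiv_apply_hcs hφ hc ((0 : ℝ), (1 : ℝ))) t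
  obtain ⟨R, hR⟩ := hhcs.isCompact.isBounded.subset_closedBall 0
  obtain ⟨R2, hR2⟩ := hc.isCompact.isBounded.subset_closedBall 0
  set R' : ℝ := |R| + |R2| + 1 with hR'
  have hR'pos : 0 < R' := by positivity
  have hRR' : R < R' := by
    have := le_abs_self R; have := abs_nonneg R2; linarith
  have hR2R' : R2 < R' := by
    have := le_abs_self R2; have := abs_nonneg R; linarith
  have hzero : ∀ x : ℝ, x ∉ Set.Ioc (-R') R' → fderiv ℝ φ (t, x) (0, 1) = 0 := by
    intro x hx
    by_contra hne
    have hmem : x ∈ tsupport fun x : ℝ => fderiv ℝ φ (t, x) (0, 1) :=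
      subset_closure (by simpa [Function.mem_support] using hne)
    have h1 := hR hmem
    rw [Metric.mem_closedBall, dist_zero_right, Real.norm_eq_abs] at h1
    simp only [Set.mem_Ioc, not_and_or, not_le, not_lt] at hx
    rw [abs_le] at h1
    rcases hx with hx | hx
    · linarith [h1.1]
    · linarith [h1.2]
  rw [← MeasureTheory.setIntegral_eq_integral_of_forall_compl_eq_zero hzero,
    MeasureTheory.integral_Ioc_eq_integral_Ioo,
    ftc_partial2 hφ t (-R') R' (by linarith)]
  have hb : ∀ y : ℝ, R' ≤ |y| → φ (t, y) = 0 := by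
    intro y hy
    have : (t, y) ∉ tsupport φ := by
      intro hmem
      have h1 := hR2 hmem
      rw [Metric.mem_closedBall, dist_zero_right] at h1
      have hsnd : |y| ≤ ‖((t, y) : ℝ × ℝ)‖ := norm_snd_le (t, y)
      linarith
    exact image_eq_zero_of_notMem_tsupport this
  rw [hb R' (by rw [abs_of_pos hR'pos]), hb (-R') (by rw [abs_neg, abs_of_pos hR'pos]), sub_zero]

end Aux2


section Aux3

variable {φ : ℝ × ℝ → ℝ}

lemma finite_restrict_Ioc (a b : ℝ) : IsFiniteMeasure (volume.restrict (Set.Ioc a b)) := by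
  constructor
  rw [Measure.restrict_apply_univ]
  exact measure_Ioc_lt_top

lemma finite_restrict_Ioo (a b : ℝ) : IsFiniteMeasure (volume.restrict (Set.Ioo a b)) := by
  constructor
  rw [Measure.restrict_apply_univ]
  exact measure_Ioo_lt_top

/-- Lipschitz bound from bounded partial derivatives. -/
lemma phi_lip (hφ : ContDiff ℝ 1 φ) (M : ℝ)
    (h1 : ∀ p, |fderiv ℝ φ p (1, 0)| ≤ M) (h2 : ∀ p, |fderiv ℝ φ p (0, 1)| ≤ M) :
    ∀ p q : ℝ × ℝ, |φ p - φ q| ≤ M * (|p.1 - q.1| + |p.2 - q.2|) := by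
  intro p q
  obtain ⟨p1, p2⟩ := p
  obtain ⟨q1, q2⟩ := q
  have key1 : |φ (p1, p2) - φ (q1, p2)| ≤ M * |p1 - q1| := by
    have hd : ∀ s ∈ (Set.univ : Set ℝ),
        HasDerivWithinAt (fun s => φ (s, p2)) (fderiv ℝ φ (s, p2) (1, 0)) Set.univ s := by
      intro s _
      have h1 : HasFDerivAt φ (fderiv ℝ φ (s, p2)) (s, p2) :=
        (hφ.differentiable one_ne_zero (s, p2)).hasFDerivAt
      have h2 : HasDerivAt (fun s : ℝ => ((s, p2) : ℝ × ℝ)) ((1 : ℝ), (0 : ℝ)) s :=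
        (hasDerivAt_id s).prodMk (hasDerivAt_const s p2)
      exact (h1.comp_hasDerivAt s h2).hasDerivWithinAt
    have := Convex.norm_image_sub_le_of_norm_hasDerivWithin_le hd
      (fun s _ => by rw [Real.norm_eq_abs]; exact h1 (s, p2)) convex_univ
      (Set.mem_univ q1) (Set.mem_univ p1)
    simpa [Real.norm_eq_abs] using this
  have key2 : |φ (q1, p2) - φ (q1, q2)| ≤ M * |p2 - q2| := by
    have hd : ∀ s ∈ (Set.univ : Set ℝ),
        HasDerivWithinAt (fun s => φ (q1, s)) (fderiv ℝ φ (q1, s) (0, 1)) Set.univ s := by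
      intro s _
      have h1 : HasFDerivAt φ (fderiv ℝ φ (q1, s)) (q1, s) :=
        (hφ.differentiable one_ne_zero (q1, s)).hasFDerivAt
      have h2' : HasDerivAt (fun s : ℝ => ((q1, s) : ℝ × ℝ)) ((0 : ℝ), (1 : ℝ)) s :=
        (hasDerivAt_const s q1).prodMk (hasDerivAt_id s)
      exact (h1.comp_hasDerivAt s h2').hasDerivWithinAt
    have := Convex.norm_image_sub_le_of_norm_hasDerivWithin_le hd
      (fun s _ => by rw [Real.norm_eq_abs]; exact h2 (q1, s)) convex_univ
      (Set.mem_univ q2) (Set.mem_univ p2)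
    simpa [Real.norm_eq_abs] using this
  show |φ (p1, p2) - φ (q1, q2)| ≤ M * (|p1 - q1| + |p2 - q2|)
  rw [mul_add]
  exact le_trans (abs_sub_le _ _ _) (add_le_add key1 key2)

/-- The key coefficient bound. -/
lemma coeff_bound (hφ : ContDiff ℝ 1 φ) (M : ℝ) (hM : 0 ≤ M)
    (hlip : ∀ p q : ℝ × ℝ, |φ p - φ q| ≤ M * (|p.1 - q.1| + |p.2 - q.2|))
    (τ h tn y a b : ℝ) (hτ : 0 < τ) (hh : 0 < h) (hτh : τ ≤ h) (hba : b - a = h)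
    (hy : ∀ x ∈ Set.Ioo a b, |x - y| ≤ h) :
    |(τ / h) * (∫ x in Set.Ioo a b, φ (tn + τ, x)) - ∫ t in Set.Ioc tn (tn + τ), φ (t, y)|
      ≤ 2 * M * h * τ := by
  have hab : a ≤ b := by linarith
  set A : ℝ := ∫ x in Set.Ioo a b, φ (tn + τ, x) with hA
  have hcontx : ∀ s : ℝ, IntegrableOn (fun x : ℝ => φ (s, x)) (Set.Ioo a b) volume := by
    intro s
    exact ((hφ.continuous.comp (continuous_const.prodMk continuous_id)).integrableOn_Icc).mono_set
      Set.Ioo_subset_Icc_self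
  have hIoo : (volume (Set.Ioo a b)).toReal = h := by
    rw [Real.volume_Ioo, ENNReal.toReal_ofReal (by linarith)]
    exact hba
  have hIoc : (volume (Set.Ioc tn (tn + τ))).toReal = τ := by
    rw [Real.volume_Ioc, ENNReal.toReal_ofReal (by linarith)]
    ring
  -- step 1
  have step1 : ∀ t ∈ Set.Ioc tn (tn + τ), |A - h * φ (t, y)| ≤ 2 * M * h * h := by
    intro t ht
    have hconst : ∫ _x in Set.Ioo a b, φ (t, y) = h * φ (t, y) := by
      rw [setIntegral_const, measureReal_def, hIoo, smul_eq_mul]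
    have hsub : A - h * φ (t, y) = ∫ x in Set.Ioo a b, (φ (tn + τ, x) - φ (t, y)) := by
      rw [integral_sub (hcontx (tn + τ)) (integrableOn_const measure_Ioo_lt_top.ne),
        hconst]
    rw [hsub]
    have hbound : ∀ x ∈ Set.Ioo a b, ‖φ (tn + τ, x) - φ (t, y)‖ ≤ 2 * M * h := by
      intro x hx
      rw [Real.norm_eq_abs]
      calc |φ (tn + τ, x) - φ (t, y)| ≤ M * (|tn + τ - t| + |x - y|) := hlip _ _
        _ ≤ M * (h + h) := by
            apply mul_le_mul_of_nonneg_left _ hM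
            have h1 : |tn + τ - t| ≤ h := by
              rw [abs_le]; constructor <;> [linarith [ht.1, ht.2]; linarith [ht.1, ht.2]]
            have h2 := hy x hx
            linarith
        _ = 2 * M * h := by ring
    calc ‖∫ x in Set.Ioo a b, (φ (tn + τ, x) - φ (t, y))‖
        ≤ (2 * M * h) * (volume (Set.Ioo a b)).toReal :=
          norm_setIntegral_le_of_norm_le_const measure_Ioo_lt_top hbound
      _ = 2 * M * h * h := by rw [hIoo]
  -- step 2
  have hcontt : IntegrableOn (fun t : ℝ => φ (t, y)) (Set.Ioc tn (tn + τ)) volume :=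
    ((hφ.continuous.comp (continuous_id.prodMk continuous_const)).integrableOn_Icc).mono_set
      Set.Ioc_subset_Icc_self
  have hconst2 : ∫ _t in Set.Ioc tn (tn + τ), (1 / h) * A = (τ / h) * A := by
    rw [setIntegral_const, measureReal_def, hIoc, smul_eq_mul]; ring
  have hsub2 : (τ / h) * A - (∫ t in Set.Ioc tn (tn + τ), φ (t, y))
      = ∫ t in Set.Ioc tn (tn + τ), ((1 / h) * A - φ (t, y)) := by
    rw [integral_sub (integrableOn_const (C := (1 / h) * A) measure_Ioc_lt_top.ne) hcontt, hconst2]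
  rw [← Real.norm_eq_abs, hsub2]
  have hbound2 : ∀ t ∈ Set.Ioc tn (tn + τ), ‖(1 / h) * A - φ (t, y)‖ ≤ 2 * M * h := by
    intro t ht
    rw [Real.norm_eq_abs]
    have : (1 / h) * A - φ (t, y) = (1 / h) * (A - h * φ (t, y)) := by
      field_simp
    rw [this, abs_mul, abs_of_pos (by positivity : (0:ℝ) < 1 / h)]
    calc (1 / h) * |A - h * φ (t, y)| ≤ (1 / h) * (2 * M * h * h) := by
          apply mul_le_mul_of_nonneg_left (step1 t ht) (by positivity)
      _ = 2 * M * h := by field_simp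
  calc ‖∫ t in Set.Ioc tn (tn + τ), ((1 / h) * A - φ (t, y))‖
      ≤ (2 * M * h) * (volume (Set.Ioc tn (tn + τ))).toReal :=
        norm_setIntegral_le_of_norm_le_const measure_Ioc_lt_top hbound2
    _ = 2 * M * h * τ := by rw [hIoc]

/-- Shift a finitely supported sum. -/
lemma sum_shift {E : Type*} [AddCommGroup E] (K : Finset ℤ) (H : ℤ → E)
    (h0 : ∀ j : ℤ, (j ∉ K ∨ j + 1 ∉ K) → H j = 0) :
    ∑ j ∈ K, H (j - 1) = ∑ j ∈ K, H j := by
  have himg : ∑ j ∈ K, H (j - 1) = ∑ j ∈ K.image (· - 1), H j := by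
    rw [Finset.sum_image (fun a _ b _ hab => by omega)]
  have h1 : ∑ j ∈ K.image (· - 1), H j = ∑ j ∈ K ∪ K.image (· - 1), H j := by
    apply Finset.sum_subset Finset.subset_union_right
    intro j _ hj
    apply h0 j
    right
    intro hj1
    exact hj (Finset.mem_image.2 ⟨j + 1, hj1, by omega⟩)
  have h2 : ∑ j ∈ K, H j = ∑ j ∈ K ∪ K.image (· - 1), H j := by
    apply Finset.sum_subset Finset.subset_union_left
    intro j _ hj
    exact h0 j (Or.inl hj)
  rw [himg, h1, ← h2]

end Aux3


section Aux4

variable {φ : ℝ × ℝ → ℝ}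

lemma cont_fderiv_apply' (hφ : ContDiff ℝ 1 φ) (w : ℝ × ℝ) :
    Continuous fun p => fderiv ℝ φ p w :=
  (hφ.continuous_fderiv one_ne_zero).clm_apply continuous_const

/-- Fubini swap + FTC in time for the time-derivative term. -/
lemma swap_lemma (hφ : ContDiff ℝ 1 φ) (M : ℝ)
    (hM1 : ∀ p, |fderiv ℝ φ p (1, 0)| ≤ M) (tn tm a b : ℝ) (h1 : tn ≤ tm) (h2 : a ≤ b) :
    Integrable (fun t => ∫ x in Set.Ioo a b, fderiv ℝ φ (t, x) (1, 0))
        (volume.restrict (Set.Ioc tn tm)) ∧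
      ∫ t in Set.Ioc tn tm, ∫ x in Set.Ioo a b, fderiv ℝ φ (t, x) (1, 0)
        = ∫ x in Set.Ioo a b, (φ (tm, x) - φ (tn, x)) := by
  set μ := volume.restrict (Set.Ioc tn tm) with hμ
  set ν := volume.restrict (Set.Ioo a b) with hν
  haveI : IsFiniteMeasure μ := by
    constructor; rw [Measure.restrict_apply_univ]; exact measure_Ioc_lt_top
  haveI : IsFiniteMeasure ν := by
    constructor; rw [Measure.restrict_apply_univ]; exact measure_Ioo_lt_top
  have hcont : Continuous (Function.uncurry fun t x => fderiv ℝ φ (t, x) (1, 0)) := by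
    have : (Function.uncurry fun t x => fderiv ℝ φ (t, x) (1, 0))
        = fun p : ℝ × ℝ => fderiv ℝ φ p (1, 0) := by
      funext p; rfl
    rw [this]
    exact cont_fderiv_apply' hφ _
  have hint : Integrable (Function.uncurry fun t x => fderiv ℝ φ (t, x) (1, 0)) (μ.prod ν) := by
    refine Integrable.mono' (integrable_const M) hcont.aestronglyMeasurable ?_
    filter_upwards with p
    have := hM1 (p.1, p.2)
    simpa [Function.uncurry, Real.norm_eq_abs] using this
  constructor
  · exact hint.integral_prod_left
  · rw [MeasureTheory.integral_integral_swap hint]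
    refine integral_congr_ae (Filter.Eventually.of_forall fun x => ?_)
    exact ftc_partial1 hφ x tn tm h1

end Aux4


/-- Shift a finitely supported sum. -/
lemma sum_shift' {E : Type*} [AddCommGroup E] (K : Finset ℤ) (H : ℤ → E)
    (h0 : ∀ j : ℤ, (j ∉ K ∨ j + 1 ∉ K) → H j = 0) :
    ∑ j ∈ K, H (j - 1) = ∑ j ∈ K, H j := by
  have himg : ∑ j ∈ K, H (j - 1) = ∑ j ∈ K.image (· - 1), H j := by
    rw [Finset.sum_image (fun a _ b _ hab => by omega)]
  have h1 : ∑ j ∈ K.image (· - 1), H j = ∑ j ∈ K ∪ K.image (· - 1), H j := by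
    apply Finset.sum_subset Finset.subset_union_right
    intro j _ hj
    refine h0 j (Or.inr fun hj1 => hj (Finset.mem_image.2 ⟨j + 1, hj1, by omega⟩))
  have h2 : ∑ j ∈ K, H j = ∑ j ∈ K ∪ K.image (· - 1), H j := by
    apply Finset.sum_subset Finset.subset_union_left
    intro j _ hj
    exact h0 j (Or.inl hj)
  rw [himg, h1, ← h2]

/-- The finite-sum algebra and estimate at the core of the weak consistency bound. -/
lemma final_algebra {E : Type*} [NormedAddCommGroup E] [NormedSpace ℝ E]
    (K : Finset ℤ) (A A' B Q : ℤ → ℝ) (uu w ee gg DD dd : ℤ → E) (τh c0 Lb : ℝ)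
    (hc0 : 0 ≤ c0) (hLb : 0 ≤ Lb)
    (hQ : ∀ j, Q j = A j - A' j)
    (hDD : ∀ j, DD j = ee j + gg (j - 1))
    (hwrec : ∀ j, w (j + 1) = w j + ee j + gg j)
    (hw1 : ∀ j, j ∉ K → w (j + 1) = 0)
    (hw0' : ∀ j, j + 1 ∉ K → w (j + 1) = 0)
    (hgg0 : ∀ j, j ∉ K → gg j = 0)
    (hgg0' : ∀ j, j + 1 ∉ K → gg j = 0)
    (hA : ∀ j, |τh * A j - B j| ≤ c0)
    (hA' : ∀ j, |τh * A (j + 1) - B j| ≤ c0)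
    (he : ∀ j, ‖ee j‖ ≤ Lb * ‖dd j‖)
    (hg : ∀ j, ‖gg j‖ ≤ Lb * ‖dd j‖) :
    ‖(∑ j ∈ K, (Q j • uu j + (B j - B (j - 1)) • w j))
        - ∑ j ∈ K, (A j • (uu j - τh • DD j) - A' j • uu j)‖
      ≤ 2 * c0 * Lb * ∑ j ∈ K, ‖dd j‖ := by
  have key : (∑ j ∈ K, (Q j • uu j + (B j - B (j - 1)) • w j))
      - (∑ j ∈ K, (A j • (uu j - τh • DD j) - A' j • uu j))
      = ∑ j ∈ K, ((τh * A j - B j) • ee j + (τh * A (j + 1) - B j) • gg j) := by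
    rw [← Finset.sum_sub_distrib]
    have hsh1 : ∑ j ∈ K, (B j • w (j + 1) - B (j - 1) • w j) = 0 := by
      have h0 : ∀ j : ℤ, (j ∉ K ∨ j + 1 ∉ K) → B j • w (j + 1) = 0 := by
        intro j hj
        rcases hj with hj | hj
        · rw [hw1 j hj, smul_zero]
        · rw [hw0' j hj, smul_zero]
      have hs := sum_shift' K (fun j => B j • w (j + 1)) h0
      have hc : ∀ j ∈ K, (fun j => B j • w (j + 1)) (j - 1) = B (j - 1) • w j := by
        intro j _
        simp only [sub_add_cancel]
      rw [Finset.sum_sub_distrib, ← Finset.sum_congr rfl hc, hs, sub_self]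
    have hsh2 : ∑ j ∈ K, ((τh * A j) • gg (j - 1) - (τh * A (j + 1)) • gg j) = 0 := by
      have h0 : ∀ j : ℤ, (j ∉ K ∨ j + 1 ∉ K) → (τh * A (j + 1)) • gg j = 0 := by
        intro j hj
        rcases hj with hj | hj
        · rw [hgg0 j hj, smul_zero]
        · rw [hgg0' j hj, smul_zero]
      have hs := sum_shift' K (fun j => (τh * A (j + 1)) • gg j) h0
      have hc : ∀ j ∈ K, (fun j => (τh * A (j + 1)) • gg j) (j - 1) = (τh * A j) • gg (j - 1) := by
        intro j _
        simp only [sub_add_cancel]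
      rw [Finset.sum_sub_distrib, ← Finset.sum_congr rfl hc, hs, sub_self]
    have step1 : ∀ j ∈ K, (Q j • uu j + (B j - B (j - 1)) • w j)
        - (A j • (uu j - τh • DD j) - A' j • uu j)
        = ((τh * A j - B j) • ee j + (τh * A (j + 1) - B j) • gg j)
          + ((B j • w (j + 1) - B (j - 1) • w j)
            + ((τh * A j) • gg (j - 1) - (τh * A (j + 1)) • gg j)) := by
      intro j _
      rw [hQ j, hDD j, hwrec j]
      module
    have split : ∑ j ∈ K, ((Q j • uu j + (B j - B (j - 1)) • w j)
        - (A j • (uu j - τh • DD j) - A' j • uu j))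
        = (∑ j ∈ K, ((τh * A j - B j) • ee j + (τh * A (j + 1) - B j) • gg j))
          + ((∑ j ∈ K, (B j • w (j + 1) - B (j - 1) • w j))
            + (∑ j ∈ K, ((τh * A j) • gg (j - 1) - (τh * A (j + 1)) • gg j))) := by
      rw [← Finset.sum_add_distrib, ← Finset.sum_add_distrib]
      exact Finset.sum_congr rfl step1
    rw [split, hsh1, hsh2, add_zero, add_zero]
  rw [key]
  calc ‖∑ j ∈ K, ((τh * A j - B j) • ee j + (τh * A (j + 1) - B j) • gg j)‖
      ≤ ∑ j ∈ K, ‖(τh * A j - B j) • ee j + (τh * A (j + 1) - B j) • gg j‖ :=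
        norm_sum_le _ _
    _ ≤ ∑ j ∈ K, (2 * c0 * Lb) * ‖dd j‖ := by
        refine Finset.sum_le_sum fun j _ => ?_
        calc ‖(τh * A j - B j) • ee j + (τh * A (j + 1) - B j) • gg j‖
            ≤ ‖(τh * A j - B j) • ee j‖ + ‖(τh * A (j + 1) - B j) • gg j‖ := norm_add_le _ _
          _ ≤ c0 * (Lb * ‖dd j‖) + c0 * (Lb * ‖dd j‖) := by
              apply add_le_add
              · rw [norm_smul, Real.norm_eq_abs]
                exact mul_le_mul (hA j) (he j) (norm_nonneg _) hc0
              · rw [norm_smul, Real.norm_eq_abs]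
                exact mul_le_mul (hA' j) (hg j) (norm_nonneg _) hc0
          _ = (2 * c0 * Lb) * ‖dd j‖ := by ring
    _ = 2 * c0 * Lb * ∑ j ∈ K, ‖dd j‖ := by rw [Finset.mul_sum]

end AuxWC

set_option maxHeartbeats 2000000 in
/-- single-time-step weak consistency (WC) estimate for the explicit
finite volume scheme with a consistent Lipschitz numerical flux. -/
theorem stmt3 (n : ℕ)
    (f : EuclideanSpace ℝ (Fin n) → EuclideanSpace ℝ (Fin n))
    (F : EuclideanSpace ℝ (Fin n) → EuclideanSpace ℝ (Fin n) → EuclideanSpace ℝ (Fin n))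
    (L : ℝ)
    (hLip : ∀ a a' b b', ‖F a b - F a' b'‖ ≤ L * (‖a - a'‖ + ‖b - b'‖))
    (hcons : ∀ p, F p p = f p) :
    ∃ C > 0, ∀ (τ h : ℝ), 0 < τ → 0 < h → τ ≤ h → ∀ (tn : ℝ)
      (uj : ℤ → EuclideanSpace ℝ (Fin n)), (Function.support uj).Finite →
      ∀ (u u' : ℝ → EuclideanSpace ℝ (Fin n)),
      (∀ (j : ℤ) (x : ℝ), x ∈ Set.Ioo (((j : ℝ) - 1) * h) ((j : ℝ) * h) → u x = uj j) →
      (∀ (j : ℤ) (x : ℝ), x ∈ Set.Ioo (((j : ℝ) - 1) * h) ((j : ℝ) * h) →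
        u' x = uj j - (τ / h) • (F (uj j) (uj (j + 1)) - F (uj (j - 1)) (uj j))) →
      ∀ (φ : ℝ × ℝ → ℝ) (M : ℝ), ContDiff ℝ 1 φ → HasCompactSupport φ →
      (∀ p, |φ p| ≤ M) →
      (∀ p, |fderiv ℝ φ p (1, 0)| ≤ M) →
      (∀ p, |fderiv ℝ φ p (0, 1)| ≤ M) →
      ‖(∫ t in tn..(tn + τ), ∫ x : ℝ,
            (fderiv ℝ φ (t, x) (1, 0)) • u x + (fderiv ℝ φ (t, x) (0, 1)) • f (u x))
          - ∫ x : ℝ, (φ (tn + τ, x) • u' x - φ (tn, x) • u x)‖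
        ≤ C * h * M * τ * ∑' j : ℤ, ‖uj (j + 1) - uj j‖ := by
  classical
  refine ⟨4 * |L| + 1, by positivity, ?_⟩
  intro τ h hτ hh hτh tn uj hfin u u' hu hu' φ M hφ hφc hMφ hM1 hM2
  have hM0 : 0 ≤ M := le_trans (abs_nonneg _) (hMφ (0, 0))
  have hlip := phi_lip hφ M hM1 hM2
  have htt : tn ≤ tn + τ := by linarith
  have cell_le : ∀ j : ℤ, ((j : ℝ) - 1) * h ≤ (j : ℝ) * h := by
    intro j; nlinarith [hh.le]
  -- the index set
  set S : Finset ℤ := hfin.toFinset with hS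
  set K : Finset ℤ := S ∪ S.image (· + 1) ∪ S.image (· - 1) with hK
  have hSu : ∀ j : ℤ, uj j ≠ 0 → j ∈ S := fun j hj => hfin.mem_toFinset.2 hj
  have hKS : ∀ j : ℤ, j ∈ S → j ∈ K := by
    intro j hj; rw [hK]
    exact Finset.mem_union.2 (Or.inl (Finset.mem_union.2 (Or.inl hj)))
  have hK0 : ∀ j : ℤ, j ∉ K → uj j = 0 := by
    intro j hj; by_contra hne; exact hj (hKS j (hSu j hne))
  have hKp : ∀ j : ℤ, j ∉ K → uj (j + 1) = 0 := by
    intro j hj; by_contra hne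
    refine hj ?_
    rw [hK]
    exact Finset.mem_union.2 (Or.inr (Finset.mem_image.2 ⟨j + 1, hSu _ hne, by omega⟩))
  have hKm : ∀ j : ℤ, j ∉ K → uj (j - 1) = 0 := by
    intro j hj; by_contra hne
    refine hj ?_
    rw [hK]
    exact Finset.mem_union.2 (Or.inl (Finset.mem_union.2
      (Or.inr (Finset.mem_image.2 ⟨j - 1, hSu _ hne, by omega⟩))))
  have hKs : ∀ j : ℤ, j + 1 ∉ K → uj j = 0 := by
    intro j hj; by_contra hne
    refine hj ?_
    rw [hK]
    exact Finset.mem_union.2 (Or.inl (Finset.mem_union.2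
      (Or.inr (Finset.mem_image.2 ⟨j, hSu _ hne, rfl⟩))))
  -- continuity facts
  have hφcont := hφ.continuous
  have c1g : Continuous fun p : ℝ × ℝ => fderiv ℝ φ p ((1 : ℝ), (0 : ℝ)) :=
    cont_fderiv_apply hφ _
  have c2g : Continuous fun p : ℝ × ℝ => fderiv ℝ φ p ((0 : ℝ), (1 : ℝ)) :=
    cont_fderiv_apply hφ _
  -- the space integral at the two time levels
  have pw2 := pw_integral hh K
    (fun j => uj j - (τ / h) • (F (uj j) (uj (j + 1)) - F (uj (j - 1)) (uj j)))
    (fun j hj => by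
      show uj j - (τ / h) • (F (uj j) (uj (j + 1)) - F (uj (j - 1)) (uj j)) = 0
      rw [hK0 j hj, hKp j hj, hKm j hj]; simp)
    (fun x => φ (tn + τ, x))
    (hφcont.comp (continuous_const.prodMk continuous_id)) u' hu'
  have pw3 := pw_integral hh K uj hK0 (fun x => φ (tn, x))
    (hφcont.comp (continuous_const.prodMk continuous_id)) u hu
  have pw2i : Integrable (fun x => φ (tn + τ, x) • u' x) volume := pw2.1
  have pw3i : Integrable (fun x => φ (tn, x) • u x) volume := pw3.1
  have pw2e : ∫ x : ℝ, φ (tn + τ, x) • u' x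
      = ∑ j ∈ K, (∫ x in Set.Ioo (((j : ℝ) - 1) * h) ((j : ℝ) * h), φ (tn + τ, x)) •
        (uj j - (τ / h) • (F (uj j) (uj (j + 1)) - F (uj (j - 1)) (uj j))) := pw2.2
  have pw3e : ∫ x : ℝ, φ (tn, x) • u x
      = ∑ j ∈ K, (∫ x in Set.Ioo (((j : ℝ) - 1) * h) ((j : ℝ) * h), φ (tn, x)) • uj j := pw3.2
  have hW : (∫ x : ℝ, (φ (tn + τ, x) • u' x - φ (tn, x) • u x))
      = ∑ j ∈ K, ((∫ x in Set.Ioo (((j : ℝ) - 1) * h) ((j : ℝ) * h), φ (tn + τ, x)) •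
          (uj j - (τ / h) • (F (uj j) (uj (j + 1)) - F (uj (j - 1)) (uj j)))
        - (∫ x in Set.Ioo (((j : ℝ) - 1) * h) ((j : ℝ) * h), φ (tn, x)) • uj j) := by
    rw [integral_sub pw2i pw3i, pw2e, pw3e, ← Finset.sum_sub_distrib]
  -- the inner space integral at a fixed time
  have hG : ∀ t : ℝ,
      (∫ x : ℝ, (fderiv ℝ φ (t, x) (1, 0)) • u x + (fderiv ℝ φ (t, x) (0, 1)) • f (u x))
        = (∑ j ∈ K, (∫ x in Set.Ioo (((j : ℝ) - 1) * h) ((j : ℝ) * h),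
              fderiv ℝ φ (t, x) (1, 0)) • uj j)
          + ∑ j ∈ K, (φ (t, (j : ℝ) * h) - φ (t, ((j : ℝ) - 1) * h)) • (f (uj j) - f 0) := by
    intro t
    have c1 : Continuous fun x : ℝ => fderiv ℝ φ (t, x) (1, 0) :=
      c1g.comp (continuous_const.prodMk continuous_id)
    have c2 : Continuous fun x : ℝ => fderiv ℝ φ (t, x) (0, 1) :=
      c2g.comp (continuous_const.prodMk continuous_id)
    have p1 := pw_integral hh K uj hK0 (fun x => fderiv ℝ φ (t, x) (1, 0)) c1 u hu
    have p2 := pw_integral hh K (fun j => f (uj j) - f 0)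
      (fun j hj => by show f (uj j) - f 0 = 0; rw [hK0 j hj, sub_self])
      (fun x => fderiv ℝ φ (t, x) (0, 1)) c2 (fun x => f (u x) - f 0)
      (fun j x hx => by show f (u x) - f 0 = f (uj j) - f 0; rw [hu j x hx])
    have p1i : Integrable (fun x : ℝ => fderiv ℝ φ (t, x) (1, 0) • u x) volume := p1.1
    have p2i : Integrable (fun x : ℝ => fderiv ℝ φ (t, x) (0, 1) • (f (u x) - f 0)) volume := p2.1
    have p3i : Integrable (fun x : ℝ => fderiv ℝ φ (t, x) (0, 1) • f 0) volume := by
      have hcs : HasCompactSupport fun x : ℝ => fderiv ℝ φ (t, x) (0, 1) :=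
        slice_hcs (fderiv_apply_hcs hφ hφc _) t
      have hcs2 : HasCompactSupport fun x : ℝ => fderiv ℝ φ (t, x) (0, 1) • f 0 :=
        hcs.comp_left (g := fun r : ℝ => r • f 0) (by simp)
      exact (c2.smul continuous_const).integrable_of_hasCompactSupport hcs2
    have p3v : ∫ x : ℝ, fderiv ℝ φ (t, x) (0, 1) • f 0 = 0 := by
      rw [integral_smul_const, integral_partial2_zero hφ hφc t, zero_smul]
    have hsplit : (fun x : ℝ =>
        (fderiv ℝ φ (t, x) (1, 0)) • u x + (fderiv ℝ φ (t, x) (0, 1)) • f (u x))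
        = fun x : ℝ => (fderiv ℝ φ (t, x) (1, 0)) • u x
            + ((fderiv ℝ φ (t, x) (0, 1)) • (f (u x) - f 0)
              + (fderiv ℝ φ (t, x) (0, 1)) • f 0) := by
      funext x
      rw [smul_sub]
      abel
    have p23i : Integrable (fun x : ℝ => (fderiv ℝ φ (t, x) (0, 1)) • (f (u x) - f 0)
        + (fderiv ℝ φ (t, x) (0, 1)) • f 0) volume := p2i.add p3i
    rw [hsplit, integral_add p1i p23i, integral_add p2i p3i, p3v, add_zero]
    have p1e : ∫ x : ℝ, fderiv ℝ φ (t, x) (1, 0) • u x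
        = ∑ j ∈ K, (∫ x in Set.Ioo (((j : ℝ) - 1) * h) ((j : ℝ) * h),
            fderiv ℝ φ (t, x) (1, 0)) • uj j := p1.2
    have p2e : ∫ x : ℝ, fderiv ℝ φ (t, x) (0, 1) • (f (u x) - f 0)
        = ∑ j ∈ K, (∫ x in Set.Ioo (((j : ℝ) - 1) * h) ((j : ℝ) * h),
            fderiv ℝ φ (t, x) (0, 1)) • (f (uj j) - f 0) := p2.2
    rw [p1e, p2e]
    congr 1
    refine Finset.sum_congr rfl fun j _ => ?_
    rw [ftc_partial2 hφ t _ _ (cell_le j)]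
  -- marginal integrability and Fubini
  have marg := fun j : ℤ => swap_lemma hφ M hM1 tn (tn + τ)
    (((j : ℝ) - 1) * h) ((j : ℝ) * h) htt (cell_le j)
  have hBint : ∀ c : ℝ, IntegrableOn (fun t : ℝ => φ (t, c)) (Set.Ioc tn (tn + τ)) volume :=
    fun c => ((hφcont.comp (continuous_id.prodMk continuous_const)).integrableOn_Icc).mono_set
      Set.Ioc_subset_Icc_self
  -- the time integral
  have hT : (∫ t in tn..(tn + τ), ∫ x : ℝ,
        (fderiv ℝ φ (t, x) (1, 0)) • u x + (fderiv ℝ φ (t, x) (0, 1)) • f (u x))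
      = ∑ j ∈ K, ((∫ x in Set.Ioo (((j : ℝ) - 1) * h) ((j : ℝ) * h),
            (φ (tn + τ, x) - φ (tn, x))) • uj j
          + ((∫ t in Set.Ioc tn (tn + τ), φ (t, (j : ℝ) * h))
              - ∫ t in Set.Ioc tn (tn + τ), φ (t, ((j - 1 : ℤ) : ℝ) * h)) •
            (f (uj j) - f 0)) := by
    rw [intervalIntegral.integral_of_le htt]
    have i1 : Integrable (fun t => ∑ j ∈ K, (∫ x in Set.Ioo (((j : ℝ) - 1) * h) ((j : ℝ) * h),
        fderiv ℝ φ (t, x) (1, 0)) • uj j) (volume.restrict (Set.Ioc tn (tn + τ))) :=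
      integrable_finset_sum _ fun j _ => ((marg j).1).smul_const _
    have iBsub : ∀ (y z : ℝ) (c : EuclideanSpace ℝ (Fin n)),
        Integrable (fun t : ℝ => (φ (t, y) - φ (t, z)) • c)
          (volume.restrict (Set.Ioc tn (tn + τ))) := by
      intro y z c
      have hsub : Integrable (fun t : ℝ => φ (t, y) - φ (t, z))
          (volume.restrict (Set.Ioc tn (tn + τ))) := (hBint y).sub (hBint z)
      exact hsub.smul_const c
    have i2 : Integrable (fun t => ∑ j ∈ K,
        (φ (t, (j : ℝ) * h) - φ (t, ((j : ℝ) - 1) * h)) • (f (uj j) - f 0))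
        (volume.restrict (Set.Ioc tn (tn + τ))) :=
      integrable_finset_sum _ fun j _ => iBsub _ _ _
    calc (∫ t in Set.Ioc tn (tn + τ), ∫ x : ℝ,
        (fderiv ℝ φ (t, x) (1, 0)) • u x + (fderiv ℝ φ (t, x) (0, 1)) • f (u x))
        = ∫ t in Set.Ioc tn (tn + τ),
            ((∑ j ∈ K, (∫ x in Set.Ioo (((j : ℝ) - 1) * h) ((j : ℝ) * h),
              fderiv ℝ φ (t, x) (1, 0)) • uj j)
            + ∑ j ∈ K, (φ (t, (j : ℝ) * h) - φ (t, ((j : ℝ) - 1) * h)) • (f (uj j) - f 0)) :=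
          integral_congr_ae (Filter.Eventually.of_forall fun t => hG t)
      _ = (∑ j ∈ K, ∫ t in Set.Ioc tn (tn + τ),
            (∫ x in Set.Ioo (((j : ℝ) - 1) * h) ((j : ℝ) * h),
              fderiv ℝ φ (t, x) (1, 0)) • uj j)
          + ∑ j ∈ K, ∫ t in Set.Ioc tn (tn + τ),
            (φ (t, (j : ℝ) * h) - φ (t, ((j : ℝ) - 1) * h)) • (f (uj j) - f 0) := by
          rw [integral_add i1 i2, integral_finset_sum _ fun j _ => ((marg j).1).smul_const _,
            integral_finset_sum _ fun j _ => iBsub _ _ _]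
      _ = ∑ j ∈ K, ((∫ x in Set.Ioo (((j : ℝ) - 1) * h) ((j : ℝ) * h),
            (φ (tn + τ, x) - φ (tn, x))) • uj j
          + ((∫ t in Set.Ioc tn (tn + τ), φ (t, (j : ℝ) * h))
              - ∫ t in Set.Ioc tn (tn + τ), φ (t, ((j - 1 : ℤ) : ℝ) * h)) •
            (f (uj j) - f 0)) := by
          rw [← Finset.sum_add_distrib]
          refine Finset.sum_congr rfl fun j _ => ?_
          congr 1
          · rw [integral_smul_const, (marg j).2]
          · rw [integral_smul_const, integral_sub (hBint _) (hBint _)]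
            have hcast : ((j : ℝ) - 1) * h = ((j - 1 : ℤ) : ℝ) * h := by push_cast; ring
            rw [hcast]
  -- assemble and estimate
  rw [hT, hW]
  have hQ : ∀ j : ℤ, (∫ x in Set.Ioo (((j : ℝ) - 1) * h) ((j : ℝ) * h),
      (φ (tn + τ, x) - φ (tn, x)))
      = (∫ x in Set.Ioo (((j : ℝ) - 1) * h) ((j : ℝ) * h), φ (tn + τ, x))
        - ∫ x in Set.Ioo (((j : ℝ) - 1) * h) ((j : ℝ) * h), φ (tn, x) := by
    intro j
    have hx : ∀ s : ℝ, IntegrableOn (fun x : ℝ => φ (s, x))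
        (Set.Ioo (((j : ℝ) - 1) * h) ((j : ℝ) * h)) volume := fun s =>
      ((hφcont.comp (continuous_const.prodMk continuous_id)).integrableOn_Icc).mono_set
        Set.Ioo_subset_Icc_self
    exact integral_sub (hx _) (hx _)
  have hbig := final_algebra K
    (fun j => ∫ x in Set.Ioo (((j : ℝ) - 1) * h) ((j : ℝ) * h), φ (tn + τ, x))
    (fun j => ∫ x in Set.Ioo (((j : ℝ) - 1) * h) ((j : ℝ) * h), φ (tn, x))
    (fun j => ∫ t in Set.Ioc tn (tn + τ), φ (t, (j : ℝ) * h))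
    (fun j => ∫ x in Set.Ioo (((j : ℝ) - 1) * h) ((j : ℝ) * h), (φ (tn + τ, x) - φ (tn, x)))
    uj
    (fun j => f (uj j) - f 0)
    (fun j => F (uj j) (uj (j + 1)) - f (uj j))
    (fun j => f (uj (j + 1)) - F (uj j) (uj (j + 1)))
    (fun j => F (uj j) (uj (j + 1)) - F (uj (j - 1)) (uj j))
    (fun j => uj (j + 1) - uj j)
    (τ / h) (2 * M * h * τ) (|L|)
    (by positivity) (abs_nonneg L)
    hQ
    (fun j => by
      show F (uj j) (uj (j + 1)) - F (uj (j - 1)) (uj j)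
        = (F (uj j) (uj (j + 1)) - f (uj j))
          + (f (uj (j - 1 + 1)) - F (uj (j - 1)) (uj (j - 1 + 1)))
      have hcast : j - 1 + 1 = j := by omega
      rw [hcast]
      abel)
    (fun j => by
      show f (uj (j + 1)) - f 0
        = (f (uj j) - f 0) + (F (uj j) (uj (j + 1)) - f (uj j))
          + (f (uj (j + 1)) - F (uj j) (uj (j + 1)))
      abel)
    (fun j hj => by
      show f (uj (j + 1)) - f 0 = 0
      rw [hKp j hj, sub_self])
    (fun j hj => by
      show f (uj (j + 1)) - f 0 = 0
      rw [hK0 (j + 1) hj, sub_self])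
    (fun j hj => by
      show f (uj (j + 1)) - F (uj j) (uj (j + 1)) = 0
      rw [hK0 j hj, hKp j hj, hcons, sub_self])
    (fun j hj => by
      show f (uj (j + 1)) - F (uj j) (uj (j + 1)) = 0
      rw [hK0 (j + 1) hj, hKs j hj, hcons, sub_self])
    (fun j => coeff_bound hφ M hM0 hlip τ h tn ((j : ℝ) * h)
      (((j : ℝ) - 1) * h) ((j : ℝ) * h) hτ hh hτh (by ring)
      (fun x hx => by
        rw [abs_le]
        constructor <;> nlinarith [hx.1, hx.2]))
    (fun j => coeff_bound hφ M hM0 hlip τ h tn ((j : ℝ) * h)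
      ((((j + 1 : ℤ) : ℝ) - 1) * h) (((j + 1 : ℤ) : ℝ) * h) hτ hh hτh (by push_cast; ring)
      (fun x hx => by
        obtain ⟨hx1, hx2⟩ := hx
        push_cast at hx1 hx2
        rw [abs_le]
        constructor <;> nlinarith))
    (fun j => by
      show ‖F (uj j) (uj (j + 1)) - f (uj j)‖ ≤ |L| * ‖uj (j + 1) - uj j‖
      have h1 : F (uj j) (uj (j + 1)) - f (uj j) = F (uj j) (uj (j + 1)) - F (uj j) (uj j) := by
        rw [hcons]
      rw [h1]
      calc ‖F (uj j) (uj (j + 1)) - F (uj j) (uj j)‖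
          ≤ L * (‖uj j - uj j‖ + ‖uj (j + 1) - uj j‖) := hLip _ _ _ _
        _ = L * ‖uj (j + 1) - uj j‖ := by rw [sub_self, norm_zero, zero_add]
        _ ≤ |L| * ‖uj (j + 1) - uj j‖ :=
            mul_le_mul_of_nonneg_right (le_abs_self L) (norm_nonneg _))
    (fun j => by
      show ‖f (uj (j + 1)) - F (uj j) (uj (j + 1))‖ ≤ |L| * ‖uj (j + 1) - uj j‖
      have h1 : f (uj (j + 1)) - F (uj j) (uj (j + 1))
          = F (uj (j + 1)) (uj (j + 1)) - F (uj j) (uj (j + 1)) := by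
        rw [hcons]
      rw [h1]
      calc ‖F (uj (j + 1)) (uj (j + 1)) - F (uj j) (uj (j + 1))‖
          ≤ L * (‖uj (j + 1) - uj j‖ + ‖uj (j + 1) - uj (j + 1)‖) := hLip _ _ _ _
        _ = L * ‖uj (j + 1) - uj j‖ := by rw [sub_self, norm_zero, add_zero]
        _ ≤ |L| * ‖uj (j + 1) - uj j‖ :=
            mul_le_mul_of_nonneg_right (le_abs_self L) (norm_nonneg _))
  refine le_trans hbig ?_
  have htsum : ∑' j : ℤ, ‖uj (j + 1) - uj j‖ = ∑ j ∈ K, ‖uj (j + 1) - uj j‖ :=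
    tsum_eq_sum (fun j hj => by rw [hK0 j hj, hKp j hj, sub_self, norm_zero])
  rw [htsum]
  have hs0 : 0 ≤ ∑ j ∈ K, ‖uj (j + 1) - uj j‖ :=
    Finset.sum_nonneg fun j _ => norm_nonneg _
  have hnn : 0 ≤ h * M * τ * ∑ j ∈ K, ‖uj (j + 1) - uj j‖ := by positivity
  nlinarith [hnn]
end

section
/- Let O, Õ ⊆ ℝⁿ be open sets, let η : O → ℝ be twice continuously differentiable such that v := ∇η : O → Õ is a bijection with continuously differentiable inverse U : Õ → O. Let f : O → ℝⁿ and q : O → ℝ be continuously differentiable and satisfy the compatibility condition Dq(x) = Dη(x) ∘ Df(x) for all x ∈ O. Let F : O × O → ℝⁿ be continuously differentiable and define F̃(α,β) := F(U(α), U(β)). Fix a', b' ∈ O with entropy variables a := ∇η(a'), b := ∇η(b'), assume the segment v(s) := a + s(b−a), s ∈ [0,1], lies in Õ, and set γ(s) := U(v(s)). Assume the second-order consistency condition: for every s ∈ [0,1], D₁F(γ(s), b') + D₂F(a', γ(s)) = Df(γ(s)) as linear maps. Then ∫₀¹ ⟨v(s), D₁F̃(v(s), b)(b−a)⟩ ds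 + ∫₀¹ ⟨v(s), D₂F̃(a, v(s))(b−a)⟩ ds = q(b') − q(a'). In particular, the two consistent numerical entropy fluxes Q^r := ∫₀¹ ⟨v(s), D₂F̃(a, v(s))(b−a)⟩ ds + q(a') and Q^l := −∫₀¹ ⟨v(s), D₁F̃(v(s), b)(b−a)⟩ ds + q(b') coincide. -/
open scoped RealInnerProductSpace
open Set

/-- Partial derivative in the first variable of a two-variable map, via the
full Fréchet derivative of the uncurried map. -/
lemma aux_hasFDerivAt_curry_left {E₁ E₂ G : Type*}
    [NormedAddCommGroup E₁] [NormedSpace ℝ E₁]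
    [NormedAddCommGroup E₂] [NormedSpace ℝ E₂]
    [NormedAddCommGroup G] [NormedSpace ℝ G]
    (f : E₁ → E₂ → G) (x : E₁) (y : E₂)
    (h : DifferentiableAt ℝ (fun p : E₁ × E₂ => f p.1 p.2) (x, y)) :
    HasFDerivAt (fun z => f z y)
      ((fderiv ℝ (fun p : E₁ × E₂ => f p.1 p.2) (x, y)).comp
        (ContinuousLinearMap.inl ℝ E₁ E₂)) x := by
  have h1 := h.hasFDerivAt.comp x (f := fun e : E₁ => (e, y)) (hasFDerivAt_prodMk_left x y)
  exact h1

/-- Partial derivative in the second variable. -/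
lemma aux_hasFDerivAt_curry_right {E₁ E₂ G : Type*}
    [NormedAddCommGroup E₁] [NormedSpace ℝ E₁]
    [NormedAddCommGroup E₂] [NormedSpace ℝ E₂]
    [NormedAddCommGroup G] [NormedSpace ℝ G]
    (f : E₁ → E₂ → G) (x : E₁) (y : E₂)
    (h : DifferentiableAt ℝ (fun p : E₁ × E₂ => f p.1 p.2) (x, y)) :
    HasFDerivAt (fun z => f x z)
      ((fderiv ℝ (fun p : E₁ × E₂ => f p.1 p.2) (x, y)).comp
        (ContinuousLinearMap.inr ℝ E₁ E₂)) y := by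
  have h1 := h.hasFDerivAt.comp y (f := fun e : E₂ => (x, e)) (hasFDerivAt_prodMk_right x y)
  exact h1

lemma aux_inner_gradient {E : Type*} [NormedAddCommGroup E] [InnerProductSpace ℝ E]
    [CompleteSpace E] (h : E → ℝ) (x u : E) :
    ⟪gradient h x, u⟫ = fderiv ℝ h x u := by
  simp [gradient, InnerProductSpace.toDual_symm_apply]

/-- under second-order consistency of the numerical flux, the two
consistent numerical entropy fluxes coincide:
`∫₀¹ ⟨v(s), D₁F̃(v(s),b)(b−a)⟩ ds + ∫₀¹ ⟨v(s), D₂F̃(a,v(s))(b−a)⟩ ds = q(b') − q(a')`,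
i.e. `Q^r = Q^l`. -/
theorem stmt9 (n : ℕ)
    (O Ot : Set (EuclideanSpace ℝ (Fin n))) (hO : IsOpen O) (hOt : IsOpen Ot)
    (η : EuclideanSpace ℝ (Fin n) → ℝ) (hη : ContDiffOn ℝ 2 η O)
    (U : EuclideanSpace ℝ (Fin n) → EuclideanSpace ℝ (Fin n))
    (hU : ContDiffOn ℝ 1 U Ot)
    (hmap : ∀ x ∈ O, gradient η x ∈ Ot)
    (hUmap : ∀ y ∈ Ot, U y ∈ O)
    (hlinv : ∀ x ∈ O, U (gradient η x) = x)
    (hrinv : ∀ y ∈ Ot, gradient η (U y) = y)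
    (f : EuclideanSpace ℝ (Fin n) → EuclideanSpace ℝ (Fin n)) (hf : ContDiffOn ℝ 1 f O)
    (q : EuclideanSpace ℝ (Fin n) → ℝ) (hq : ContDiffOn ℝ 1 q O)
    (hcompat : ∀ x ∈ O, fderiv ℝ q x = (fderiv ℝ η x).comp (fderiv ℝ f x))
    (F : EuclideanSpace ℝ (Fin n) → EuclideanSpace ℝ (Fin n) → EuclideanSpace ℝ (Fin n))
    (hF : ContDiffOn ℝ 1 (fun p : EuclideanSpace ℝ (Fin n) × EuclideanSpace ℝ (Fin n) =>
      F p.1 p.2) (O ×ˢ O))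
    (a' b' : EuclideanSpace ℝ (Fin n)) (ha' : a' ∈ O) (hb' : b' ∈ O)
    (a b : EuclideanSpace ℝ (Fin n)) (ha : a = gradient η a') (hb : b = gradient η b')
    (hseg : ∀ s ∈ Set.Icc (0:ℝ) 1, a + s • (b - a) ∈ Ot)
    (γ : ℝ → EuclideanSpace ℝ (Fin n)) (hγ : ∀ s, γ s = U (a + s • (b - a)))
    (hsoc : ∀ s ∈ Set.Icc (0:ℝ) 1,
      fderiv ℝ (fun z => F z b') (γ s) + fderiv ℝ (fun z => F a' z) (γ s)
        = fderiv ℝ f (γ s)) :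
    (∫ s in (0:ℝ)..1,
        ⟪a + s • (b - a), fderiv ℝ (fun z => F (U z) (U b)) (a + s • (b - a)) (b - a)⟫)
      + (∫ s in (0:ℝ)..1,
        ⟪a + s • (b - a), fderiv ℝ (fun z => F (U a) (U z)) (a + s • (b - a)) (b - a)⟫)
      = q b' - q a' := by
  classical
  have hUb : U b = b' := by rw [hb]; exact hlinv b' hb'
  have hUa : U a = a' := by rw [ha]; exact hlinv a' ha'
  set w : ℝ → EuclideanSpace ℝ (Fin n) := fun s => a + s • (b - a) with hw
  have hγdef : γ = fun s => U (w s) := funext hγ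
  have hγO : ∀ s ∈ Icc (0:ℝ) 1, γ s ∈ O := fun s hs => by
    rw [hγ s]; exact hUmap _ (hseg s hs)
  have hgradγ : ∀ s ∈ Icc (0:ℝ) 1, gradient η (γ s) = w s := fun s hs => by
    rw [hγ s]; exact hrinv _ (hseg s hs)
  have hFu : ∀ p ∈ O ×ˢ O, DifferentiableAt ℝ (fun p : EuclideanSpace ℝ (Fin n) × EuclideanSpace ℝ (Fin n) => F p.1 p.2) p :=
    fun p hp => (hF.contDiffAt ((hO.prod hO).mem_nhds hp)).differentiableAt one_ne_zero
  -- partial derivatives of F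
  set DF : EuclideanSpace ℝ (Fin n) × EuclideanSpace ℝ (Fin n) → (EuclideanSpace ℝ (Fin n) × EuclideanSpace ℝ (Fin n) →L[ℝ] EuclideanSpace ℝ (Fin n)) := fun p => fderiv ℝ (fun p : EuclideanSpace ℝ (Fin n) × EuclideanSpace ℝ (Fin n) => F p.1 p.2) p
    with hDF
  have hD1 : ∀ x ∈ O, HasFDerivAt (fun z => F z b')
      ((DF (x, b')).comp (ContinuousLinearMap.inl ℝ (EuclideanSpace ℝ (Fin n)) (EuclideanSpace ℝ (Fin n)))) x := fun x hx =>
    aux_hasFDerivAt_curry_left F x b' (hFu (x, b') ⟨hx, hb'⟩)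
  have hD2 : ∀ y ∈ O, HasFDerivAt (fun z => F a' z)
      ((DF (a', y)).comp (ContinuousLinearMap.inr ℝ (EuclideanSpace ℝ (Fin n)) (EuclideanSpace ℝ (Fin n)))) y := fun y hy =>
    aux_hasFDerivAt_curry_right F a' y (hFu (a', y) ⟨ha', hy⟩)
  -- differentiability of U along the segment
  have hUdiff : ∀ s ∈ Icc (0:ℝ) 1, DifferentiableAt ℝ U (w s) := fun s hs =>
    (hU.contDiffAt (hOt.mem_nhds (hseg s hs))).differentiableAt one_ne_zero
  set DU : ℝ → (EuclideanSpace ℝ (Fin n) →L[ℝ] EuclideanSpace ℝ (Fin n)) := fun s => fderiv ℝ U (w s) with hDU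
  set u : ℝ → EuclideanSpace ℝ (Fin n) := fun s => DU s (b - a) with hu
  -- derivative of w and γ
  have hwd : ∀ s : ℝ, HasDerivAt w (b - a) s := fun s => by
    simpa [hw] using ((hasDerivAt_id s).smul_const (b - a)).const_add a
  have hγd : ∀ s ∈ Icc (0:ℝ) 1, HasDerivAt γ (u s) s := fun s hs => by
    rw [hγdef]
    exact (hUdiff s hs).hasFDerivAt.comp_hasDerivAt s (hwd s)
  -- the two integrands, rewritten
  set J₁ : ℝ → ℝ := fun s => ⟪w s, (DF (γ s, b')) (u s, 0)⟫ with hJ₁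
  set J₂ : ℝ → ℝ := fun s => ⟪w s, (DF (a', γ s)) (0, u s)⟫ with hJ₂
  set g' : ℝ → ℝ := fun s => fderiv ℝ q (γ s) (u s) with hg'
  have huIcc : uIcc (0:ℝ) 1 = Icc (0:ℝ) 1 := uIcc_of_le zero_le_one
  -- Step A: rewrite the first integrand
  have keyA : ∀ s ∈ Icc (0:ℝ) 1,
      ⟪w s, fderiv ℝ (fun z => F (U z) (U b)) (w s) (b - a)⟫ = J₁ s := by
    intro s hs
    have h1 := hD1 (γ s) (hγO s hs)
    rw [hγ s] at h1
    have hcomp : HasFDerivAt (fun z => F (U z) (U b))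
        (((DF (γ s, b')).comp (ContinuousLinearMap.inl ℝ (EuclideanSpace ℝ (Fin n)) (EuclideanSpace ℝ (Fin n)))).comp (DU s)) (w s) := by
      simp only [hUb]
      rw [hγ s] at *
      exact h1.comp (w s) (hUdiff s hs).hasFDerivAt
    rw [hcomp.fderiv]
    simp [J₁, u, ContinuousLinearMap.comp_apply]
  have keyB : ∀ s ∈ Icc (0:ℝ) 1,
      ⟪w s, fderiv ℝ (fun z => F (U a) (U z)) (w s) (b - a)⟫ = J₂ s := by
    intro s hs
    have h2 := hD2 (γ s) (hγO s hs)
    rw [hγ s] at h2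
    have hcomp : HasFDerivAt (fun z => F (U a) (U z))
        (((DF (a', γ s)).comp (ContinuousLinearMap.inr ℝ (EuclideanSpace ℝ (Fin n)) (EuclideanSpace ℝ (Fin n)))).comp (DU s)) (w s) := by
      simp only [hUa]
      rw [hγ s] at *
      exact h2.comp (w s) (hUdiff s hs).hasFDerivAt
    rw [hcomp.fderiv]
    simp [J₂, u, ContinuousLinearMap.comp_apply]
  -- Step B: the sum of the integrands is the derivative of q ∘ γ
  have keyC : ∀ s ∈ Icc (0:ℝ) 1, J₁ s + J₂ s = g' s := by
    intro s hs
    have e1 : (DF (γ s, b')) (u s, 0)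
        = fderiv ℝ (fun z => F z b') (γ s) (u s) := by
      rw [(hD1 (γ s) (hγO s hs)).fderiv]
      simp
    have e2 : (DF (a', γ s)) (0, u s)
        = fderiv ℝ (fun z => F a' z) (γ s) (u s) := by
      rw [(hD2 (γ s) (hγO s hs)).fderiv]
      simp
    have : J₁ s + J₂ s
        = ⟪w s, (fderiv ℝ (fun z => F z b') (γ s) + fderiv ℝ (fun z => F a' z) (γ s))
            (u s)⟫ := by
      simp only [J₁, J₂, e1, e2, ContinuousLinearMap.add_apply]
      rw [← inner_add_right]
    rw [this, hsoc s hs]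
    have hgr : ⟪w s, fderiv ℝ f (γ s) (u s)⟫
        = fderiv ℝ η (γ s) (fderiv ℝ f (γ s) (u s)) := by
      rw [← hgradγ s hs]
      exact aux_inner_gradient η (γ s) _
    rw [hgr]
    have := hcompat (γ s) (hγO s hs)
    simp only [g', this, ContinuousLinearMap.comp_apply]
  -- derivative of q ∘ γ
  have hqd : ∀ s ∈ Icc (0:ℝ) 1, HasDerivAt (fun t => q (γ t)) (g' s) s := fun s hs => by
    have hqdiff : DifferentiableAt ℝ q (γ s) :=
      (hq.contDiffAt (hO.mem_nhds (hγO s hs))).differentiableAt one_ne_zero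
    exact hqdiff.hasFDerivAt.comp_hasDerivAt s (hγd s hs)
  -- continuity facts
  have contw : Continuous w := by fun_prop
  have contγ : ContinuousOn γ (Icc (0:ℝ) 1) := by
    rw [hγdef]
    exact hU.continuousOn.comp contw.continuousOn hseg
  have contDU : ContinuousOn DU (Icc (0:ℝ) 1) :=
    (hU.continuousOn_fderiv_of_isOpen hOt le_rfl).comp contw.continuousOn hseg
  have contu : ContinuousOn u (Icc (0:ℝ) 1) := contDU.clm_apply continuousOn_const
  have contDF : ContinuousOn DF (O ×ˢ O) :=
    hF.continuousOn_fderiv_of_isOpen (hO.prod hO) le_rfl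
  have contJ₁ : ContinuousOn J₁ (Icc (0:ℝ) 1) := by
    apply ContinuousOn.inner contw.continuousOn
    exact (contDF.comp (contγ.prodMk continuousOn_const)
        (fun s hs => Set.mk_mem_prod (hγO s hs) hb')).clm_apply
      (contu.prodMk continuousOn_const)
  have contJ₂ : ContinuousOn J₂ (Icc (0:ℝ) 1) := by
    apply ContinuousOn.inner contw.continuousOn
    exact (contDF.comp (continuousOn_const.prodMk contγ)
        (fun s hs => Set.mk_mem_prod ha' (hγO s hs))).clm_apply
      (continuousOn_const.prodMk contu)
  have intJ₁ : IntervalIntegrable J₁ MeasureTheory.volume 0 1 :=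
    (huIcc ▸ contJ₁ : ContinuousOn J₁ (uIcc (0:ℝ) 1)).intervalIntegrable
  have intJ₂ : IntervalIntegrable J₂ MeasureTheory.volume 0 1 :=
    (huIcc ▸ contJ₂ : ContinuousOn J₂ (uIcc (0:ℝ) 1)).intervalIntegrable
  have intg' : IntervalIntegrable g' MeasureTheory.volume 0 1 := by
    have contg' : ContinuousOn g' (Icc (0:ℝ) 1) :=
      ((hq.continuousOn_fderiv_of_isOpen hO le_rfl).comp contγ hγO).clm_apply contu
    exact (huIcc ▸ contg' : ContinuousOn g' (uIcc (0:ℝ) 1)).intervalIntegrable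
  -- fundamental theorem of calculus
  have hFTC : (∫ s in (0:ℝ)..1, g' s) = q b' - q a' := by
    have := intervalIntegral.integral_eq_sub_of_hasDerivAt
      (f := fun t => q (γ t)) (f' := g')
      (fun s hs => hqd s (huIcc ▸ hs)) intg'
    rw [this]
    show q (γ 1) - q (γ 0) = q b' - q a'
    rw [hγ 1, hγ 0]
    norm_num [hUa, hUb]
  calc (∫ s in (0:ℝ)..1,
        ⟪w s, fderiv ℝ (fun z => F (U z) (U b)) (w s) (b - a)⟫)
      + (∫ s in (0:ℝ)..1,
        ⟪w s, fderiv ℝ (fun z => F (U a) (U z)) (w s) (b - a)⟫)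
      = (∫ s in (0:ℝ)..1, J₁ s) + (∫ s in (0:ℝ)..1, J₂ s) := by
        rw [intervalIntegral.integral_congr (g := J₁) (fun s hs => keyA s (huIcc ▸ hs)),
          intervalIntegral.integral_congr (g := J₂) (fun s hs => keyB s (huIcc ▸ hs))]
    _ = ∫ s in (0:ℝ)..1, (J₁ s + J₂ s) := (intervalIntegral.integral_add intJ₁ intJ₂).symm
    _ = ∫ s in (0:ℝ)..1, g' s :=
        intervalIntegral.integral_congr (fun s hs => keyC s (huIcc ▸ hs))
    _ = q b' - q a' := hFTC
end

section
/- Let F : ℝⁿ × ℝⁿ → ℝⁿ be continuously differentiable and consistent with f : ℝⁿ → ℝⁿ, i.e. F(p,p) = f(p) for all p. Then for all a, b ∈ ℝⁿ, writing γ(s) := a + s(b−a), one has f(b) − f(a) = ∫₀¹ (D₁F(γ(s), b) + D₂F(a, γ(s)))(b − a) ds. -/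
/-- for a continuously differentiable numerical flux `F` consistent with
`f`, along `γ(s) = a + s(b−a)`:
`f(b) − f(a) = ∫₀¹ (D₁F(γ(s),b) + D₂F(a,γ(s)))(b−a) ds`. -/
theorem stmt13 (n : ℕ)
    (f : EuclideanSpace ℝ (Fin n) → EuclideanSpace ℝ (Fin n))
    (F : EuclideanSpace ℝ (Fin n) → EuclideanSpace ℝ (Fin n) → EuclideanSpace ℝ (Fin n))
    (hF : ContDiff ℝ 1 (fun p : EuclideanSpace ℝ (Fin n) × EuclideanSpace ℝ (Fin n) =>
      F p.1 p.2))
    (hcons : ∀ p, F p p = f p)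
    (a b : EuclideanSpace ℝ (Fin n)) :
    f b - f a
      = ∫ s in (0:ℝ)..1,
          (fderiv ℝ (fun z => F z b) (a + s • (b - a))
            + fderiv ℝ (fun z => F a z) (a + s • (b - a))) (b - a) := by
  have hF1 : ContDiff ℝ 1 (fun z => F z b) :=
    hF.comp (contDiff_id.prodMk contDiff_const)
  have hF2 : ContDiff ℝ 1 (fun z => F a z) :=
    hF.comp (contDiff_const.prodMk contDiff_id)
  have hγ : ∀ s : ℝ, HasDerivAt (fun s : ℝ => a + s • (b - a)) (b - a) s := by
    intro s
    have h := ((hasDerivAt_id s).smul_const (b - a)).const_add a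
    simpa using h
  have hd1 : ∀ s : ℝ, HasDerivAt (fun s : ℝ => F (a + s • (b - a)) b)
      ((fderiv ℝ (fun z => F z b) (a + s • (b - a))) (b - a)) s := by
    intro s
    exact ((hF1.differentiable one_ne_zero (a + s • (b - a))).hasFDerivAt).comp_hasDerivAt s (hγ s)
  have hd2 : ∀ s : ℝ, HasDerivAt (fun s : ℝ => F a (a + s • (b - a)))
      ((fderiv ℝ (fun z => F a z) (a + s • (b - a))) (b - a)) s := by
    intro s
    exact ((hF2.differentiable one_ne_zero (a + s • (b - a))).hasFDerivAt).comp_hasDerivAt s (hγ s)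
  have hcγ : Continuous (fun s : ℝ => a + s • (b - a)) := by continuity
  have hc1 : Continuous (fun s : ℝ =>
      (fderiv ℝ (fun z => F z b) (a + s • (b - a))) (b - a)) := by
    have := (hF1.continuous_fderiv one_ne_zero).comp hcγ
    exact (ContinuousLinearMap.apply ℝ _ (b - a)).continuous.comp this
  have hc2 : Continuous (fun s : ℝ =>
      (fderiv ℝ (fun z => F a z) (a + s • (b - a))) (b - a)) := by
    have := (hF2.continuous_fderiv one_ne_zero).comp hcγ
    exact (ContinuousLinearMap.apply ℝ _ (b - a)).continuous.comp this
  have hi1 := intervalIntegral.integral_eq_sub_of_hasDerivAt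
    (f := fun s : ℝ => F (a + s • (b - a)) b)
    (fun s _ => hd1 s) (hc1.intervalIntegrable 0 1)
  have hi2 := intervalIntegral.integral_eq_sub_of_hasDerivAt
    (f := fun s : ℝ => F a (a + s • (b - a)))
    (fun s _ => hd2 s) (hc2.intervalIntegrable 0 1)
  simp only [zero_smul, one_smul, add_zero] at hi1 hi2
  have hab : a + (b - a) = b := by abel
  rw [hab] at hi1 hi2
  have hsum : (∫ s in (0:ℝ)..1,
      (fderiv ℝ (fun z => F z b) (a + s • (b - a))
        + fderiv ℝ (fun z => F a z) (a + s • (b - a))) (b - a))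
      = (∫ s in (0:ℝ)..1, (fderiv ℝ (fun z => F z b) (a + s • (b - a))) (b - a))
        + ∫ s in (0:ℝ)..1, (fderiv ℝ (fun z => F a z) (a + s • (b - a))) (b - a) := by
    rw [← intervalIntegral.integral_add (hc1.intervalIntegrable 0 1)
      (hc2.intervalIntegrable 0 1)]
    rfl
  rw [hsum, hi1, hi2, hcons a, hcons b]
  abel
end
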